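/- Let n ≥ 1, N ≥ 1, q > 0, let Ω ⊆ ℝ^n be measurable, and let w₁, w₂ ∈ L^{q+1}(Ω, ℝ^N). Then there exists a constant c > 0 depending only on q such that ∫_Ω |w₁ − w₂|^{q+1} dx ≤ c·( ∫_Ω (|w₁| + |w₂|)^{q+1} dx )^{1/2} · ( ∫_Ω |w₁^{⟨(q+1)/2⟩} − w₂^{⟨(q+1)/2⟩}|² dx )^{1/2}, where both integrals on the right-hand side are finite. -/

import Mathlib

open MeasureTheory

/-- For `α > 0` and a vector `u`, the power `u^{⟨α⟩} := ‖u‖^(α-1) • u` (with `0^{⟨α⟩} = 0`). -/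
noncomputable def vpow {E : Type*} [NormedAddCommGroup E] [NormedSpace ℝ E] (α : ℝ) (u : E) : E :=
  (‖u‖ ^ (α - 1)) • u

section Aux
open Real
variable {E : Type*} [NormedAddCommGroup E] [NormedSpace ℝ E]

lemma vpow_one (u : E) : vpow 1 u = u := by simp [vpow]

lemma norm_vpow {α : ℝ} (hα : 0 < α) (u : E) : ‖vpow α u‖ = ‖u‖ ^ α := by
  rcases eq_or_ne u 0 with rfl | hu
  · simp [vpow, Real.zero_rpow hα.ne']
  · have h0 : (0:ℝ) < ‖u‖ := norm_pos_iff.mpr hu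
    rw [vpow, norm_smul, Real.norm_of_nonneg (Real.rpow_nonneg (norm_nonneg u) _),
      ← Real.rpow_add_one h0.ne' (α - 1)]
    ring_nf

lemma vpow_vpow {α γ : ℝ} (hα : 0 < α) (u : E) : vpow γ (vpow α u) = vpow (γ * α) u := by
  rcases eq_or_ne u 0 with rfl | hu
  · simp [vpow]
  · have h0 : (0:ℝ) < ‖u‖ := norm_pos_iff.mpr hu
    rw [vpow, norm_vpow hα, vpow, vpow, smul_smul]
    congr 1
    rw [← Real.rpow_mul (norm_nonneg u), ← Real.rpow_add h0]
    ring_nf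

lemma L1_aux {γ : ℝ} (hγ0 : 0 < γ) (hγ1 : γ ≤ 1) (A B : E) (hBA : ‖B‖ ≤ ‖A‖) :
    ‖vpow γ A - vpow γ B‖ ≤ 3 * ‖A - B‖ ^ γ := by
  set s := ‖A‖ with hs
  set t := ‖B‖ with ht
  set d := ‖A - B‖ with hdd
  have hd0 : 0 ≤ d := norm_nonneg _
  have ht0 : 0 ≤ t := norm_nonneg _
  have hst : s ≤ t + d := by
    have := norm_sub_norm_le A B
    linarith
  by_cases htd : t ≤ d
  · calc ‖vpow γ A - vpow γ B‖ ≤ ‖vpow γ A‖ + ‖vpow γ B‖ := norm_sub_le _ _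
    _ = s ^ γ + t ^ γ := by rw [norm_vpow hγ0, norm_vpow hγ0]
    _ ≤ (2*d) ^ γ + d ^ γ := by
        gcongr <;> linarith
    _ ≤ 2 * d ^ γ + d ^ γ := by
        rw [Real.mul_rpow (by norm_num) hd0]
        have h2 : (2:ℝ) ^ γ ≤ 2 := by
          calc (2:ℝ)^γ ≤ 2^(1:ℝ) := Real.rpow_le_rpow_of_exponent_le one_le_two hγ1
          _ = 2 := Real.rpow_one 2
        have := Real.rpow_nonneg hd0 γ
        nlinarith
    _ = 3 * d ^ γ := by ring
  · push_neg at htd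
    rcases eq_or_lt_of_le hd0 with hd | hd
    · have hAB : A = B := sub_eq_zero.mp (norm_eq_zero.mp hd.symm)
      rw [hAB, sub_self, norm_zero]
      positivity
    · have htpos : 0 < t := lt_trans hd htd
      have hspos : 0 < s := lt_of_lt_of_le htpos hBA
      have key : vpow γ A - vpow γ B = t^(γ-1) • (A - B) + (s^(γ-1) - t^(γ-1)) • A := by
        rw [vpow, vpow, ← hs, ← ht]
        module
      rw [key]
      have h1 : ‖t^(γ-1) • (A - B)‖ ≤ d ^ γ := by
        rw [norm_smul, Real.norm_of_nonneg (Real.rpow_nonneg ht0 _)]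
        calc t^(γ-1) * d ≤ d^(γ-1) * d :=
              mul_le_mul_of_nonneg_right
                (Real.rpow_le_rpow_of_nonpos hd htd.le (by linarith)) hd0
        _ = d ^ γ := by rw [← Real.rpow_add_one hd.ne']; ring_nf
      have h2 : ‖(s^(γ-1) - t^(γ-1)) • A‖ ≤ d ^ γ := by
        have hmono : s^(γ-1) ≤ t^(γ-1) :=
          Real.rpow_le_rpow_of_nonpos htpos hBA (by linarith)
        rw [norm_smul, Real.norm_eq_abs, abs_of_nonpos (by linarith), neg_sub]
        have e1 : t * t^(γ-1) = t^γ := by rw [mul_comm, ← Real.rpow_add_one htpos.ne']; ring_nf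
        have e2 : s * s^(γ-1) = s^γ := by rw [mul_comm, ← Real.rpow_add_one hspos.ne']; ring_nf
        have e3 : t^γ ≤ s^γ := Real.rpow_le_rpow ht0 hBA hγ0.le
        have e4 : t^(γ-1) ≤ d^(γ-1) := Real.rpow_le_rpow_of_nonpos hd htd.le (by linarith)
        have e5 : d * d^(γ-1) = d^γ := by rw [mul_comm, ← Real.rpow_add_one hd.ne']; ring_nf
        calc (t^(γ-1) - s^(γ-1)) * s ≤ (t+d) * t^(γ-1) - s * s^(γ-1) := by
              nlinarith [Real.rpow_nonneg ht0 (γ-1)]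
        _ = t^γ + d * t^(γ-1) - s^γ := by rw [← e1, ← e2]; ring
        _ ≤ d * t^(γ-1) := by linarith
        _ ≤ d ^ γ := by
            calc d * t^(γ-1) ≤ d * d^(γ-1) := by
                  exact mul_le_mul_of_nonneg_left e4 hd0
            _ = d^γ := e5
      calc ‖t^(γ-1) • (A - B) + (s^(γ-1) - t^(γ-1)) • A‖
          ≤ ‖t^(γ-1) • (A - B)‖ + ‖(s^(γ-1) - t^(γ-1)) • A‖ := norm_add_le _ _
      _ ≤ d^γ + d^γ := add_le_add h1 h2
      _ ≤ 3 * d^γ := by nlinarith [Real.rpow_nonneg hd0 γ]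

lemma L1' {γ : ℝ} (hγ0 : 0 < γ) (hγ1 : γ ≤ 1) (A B : E) :
    ‖vpow γ A - vpow γ B‖ ≤ 3 * ‖A - B‖ ^ γ := by
  rcases le_total ‖B‖ ‖A‖ with h | h
  · exact L1_aux hγ0 hγ1 A B h
  · rw [norm_sub_rev, norm_sub_rev A B]
    exact L1_aux hγ0 hγ1 B A h

lemma L2_aux {γ : ℝ} (hγ1 : 1 ≤ γ) (hγ2 : γ ≤ 2) (A B : E) (hBA : ‖B‖ ≤ ‖A‖) :
    ‖vpow γ A - vpow γ B‖ ≤ 2 * (‖A‖ + ‖B‖) ^ (γ-1) * ‖A - B‖ := by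
  set s := ‖A‖ with hs
  set t := ‖B‖ with ht
  set d := ‖A - B‖ with hdd
  have hd0 : 0 ≤ d := norm_nonneg _
  have ht0 : 0 ≤ t := norm_nonneg _
  have hs0 : 0 ≤ s := le_trans ht0 hBA
  have hst : s - t ≤ d := by
    have := norm_sub_norm_le A B
    linarith
  have hβ0 : 0 ≤ γ - 1 := by linarith
  have key : vpow γ A - vpow γ B = s^(γ-1) • (A - B) + (s^(γ-1) - t^(γ-1)) • B := by
    rw [vpow, vpow, ← hs, ← ht]
    module
  have h1 : ‖s^(γ-1) • (A - B)‖ ≤ (s+t)^(γ-1) * d := by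
    rw [norm_smul, Real.norm_of_nonneg (Real.rpow_nonneg hs0 _)]
    exact mul_le_mul_of_nonneg_right
      (Real.rpow_le_rpow hs0 (by linarith) hβ0) hd0
  have h2 : ‖(s^(γ-1) - t^(γ-1)) • B‖ ≤ (s+t)^(γ-1) * d := by
    have hmono : t^(γ-1) ≤ s^(γ-1) := Real.rpow_le_rpow ht0 hBA hβ0
    rw [norm_smul, Real.norm_of_nonneg (by linarith)]
    rcases eq_or_lt_of_le ht0 with h | htpos
    · rw [show ‖B‖ = t from rfl, ← h, mul_zero]
      positivity
    · have hq : s^(γ-1) ≤ t^(γ-1) * (s/t) := by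
        have hdiv1 : (1:ℝ) ≤ s/t := (one_le_div htpos).mpr hBA
        have : (s/t)^(γ-1) ≤ (s/t)^(1:ℝ) :=
          Real.rpow_le_rpow_of_exponent_le hdiv1 (by linarith)
        rw [Real.rpow_one] at this
        have hdr : (s/t)^(γ-1) = s^(γ-1) / t^(γ-1) :=
          Real.div_rpow hs0 ht0 _
        rw [hdr, div_le_iff₀ (Real.rpow_pos_of_pos htpos _)] at this
        linarith [this]
      have h3 : (s^(γ-1) - t^(γ-1)) * t ≤ t^(γ-1) * (s - t) := by
        have := mul_le_mul_of_nonneg_right (sub_le_sub_right hq (t^(γ-1))) ht0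
        calc (s^(γ-1) - t^(γ-1)) * t ≤ (t^(γ-1)*(s/t) - t^(γ-1)) * t := this
        _ = t^(γ-1) * (s - t) := by field_simp
      calc (s^(γ-1) - t^(γ-1)) * t ≤ t^(γ-1) * (s - t) := h3
      _ ≤ (s+t)^(γ-1) * d :=
          mul_le_mul (Real.rpow_le_rpow ht0 (by linarith) hβ0) hst
            (by linarith) (Real.rpow_nonneg (by linarith) _)
  calc ‖vpow γ A - vpow γ B‖
      = ‖s^(γ-1) • (A - B) + (s^(γ-1) - t^(γ-1)) • B‖ := by rw [key]
  _ ≤ ‖s^(γ-1) • (A - B)‖ + ‖(s^(γ-1) - t^(γ-1)) • B‖ := norm_add_le _ _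
  _ ≤ (s+t)^(γ-1) * d + (s+t)^(γ-1) * d := add_le_add h1 h2
  _ = 2 * (s+t)^(γ-1) * d := by ring

lemma L2' {γ : ℝ} (hγ1 : 1 ≤ γ) (hγ2 : γ ≤ 2) (A B : E) :
    ‖vpow γ A - vpow γ B‖ ≤ 2 * (‖A‖ + ‖B‖) ^ (γ-1) * ‖A - B‖ := by
  rcases le_total ‖B‖ ‖A‖ with h | h
  · exact L2_aux hγ1 hγ2 A B h
  · rw [norm_sub_rev, norm_sub_rev A B, add_comm ‖A‖]
    exact L2_aux hγ1 hγ2 B A h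

lemma keyineq {α : ℝ} (hα : 1/2 < α) (a b : E) :
    ‖a - b‖ ^ (2*α) ≤ (3 ^ α + 4) * ((‖a‖ + ‖b‖) ^ α * ‖vpow α a - vpow α b‖) := by
  have hα0 : (0:ℝ) < α := by linarith
  have hαne : α ≠ 0 := hα0.ne'
  set A := vpow α a with hA
  set B := vpow α b with hB
  set D := ‖A - B‖ with hD
  set S := ‖a‖ + ‖b‖ with hS
  have hD0 : 0 ≤ D := norm_nonneg _
  have hS0 : 0 ≤ S := by positivity
  have habS : ‖a - b‖ ≤ S := norm_sub_le a b
  have hab0 : 0 ≤ ‖a - b‖ := norm_nonneg _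
  have h3α : (0:ℝ) ≤ 3 ^ α := Real.rpow_nonneg (by norm_num) α
  have hva : vpow (1/α) A = a := by
    rw [hA, vpow_vpow hα0, one_div, inv_mul_cancel₀ hαne, vpow_one]
  have hvb : vpow (1/α) B = b := by
    rw [hB, vpow_vpow hα0, one_div, inv_mul_cancel₀ hαne, vpow_one]
  rcases le_or_gt 1 α with hα1 | hα1
  · -- α ≥ 1, γ = 1/α ≤ 1
    have hγ0 : 0 < 1/α := by positivity
    have hγ1 : 1/α ≤ 1 := by
      rw [div_le_one hα0]; linarith
    have h := L1' hγ0 hγ1 A B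
    rw [hva, hvb] at h
    have h' : ‖a - b‖ ^ α ≤ 3 ^ α * D := by
      calc ‖a - b‖ ^ α ≤ (3 * D ^ (1/α)) ^ α := Real.rpow_le_rpow hab0 h hα0.le
      _ = 3 ^ α * (D ^ (1/α)) ^ α := Real.mul_rpow (by norm_num) (Real.rpow_nonneg hD0 _)
      _ = 3 ^ α * D := by
          rw [← Real.rpow_mul hD0, one_div, inv_mul_cancel₀ hαne, Real.rpow_one]
    have hne : α + α ≠ 0 := by positivity
    calc ‖a - b‖ ^ (2*α) = ‖a - b‖ ^ α * ‖a - b‖ ^ α := by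
          rw [two_mul, Real.rpow_add' hab0 hne]
    _ ≤ S ^ α * (3 ^ α * D) :=
        mul_le_mul (Real.rpow_le_rpow hab0 habS hα0.le) h'
          (Real.rpow_nonneg hab0 α) (Real.rpow_nonneg hS0 α)
    _ ≤ (3 ^ α + 4) * (S ^ α * D) := by
        nlinarith [Real.rpow_nonneg hS0 α, hD0, mul_nonneg (Real.rpow_nonneg hS0 α) hD0]
  · -- 1/2 < α < 1, γ = 1/α ∈ [1,2]
    have hγ1 : 1 ≤ 1/α := by rw [le_div_iff₀ hα0]; linarith
    have hγ2 : 1/α ≤ 2 := by rw [div_le_iff₀ hα0]; linarith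
    have hβ0 : (0:ℝ) ≤ 1/α - 1 := by linarith
    have h := L2' hγ1 hγ2 A B
    rw [hva, hvb] at h
    have hABnorm : ‖A‖ + ‖B‖ ≤ 2 * S ^ α := by
      rw [hA, hB, norm_vpow hα0, norm_vpow hα0]
      have h1 : ‖a‖ ^ α ≤ S ^ α :=
        Real.rpow_le_rpow (norm_nonneg a) (by rw [hS]; linarith [norm_nonneg b]) hα0.le
      have h2 : ‖b‖ ^ α ≤ S ^ α :=
        Real.rpow_le_rpow (norm_nonneg b) (by rw [hS]; linarith [norm_nonneg a]) hα0.le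
      linarith
    have hbase : (‖A‖ + ‖B‖) ^ (1/α - 1) ≤ 2 * S ^ (1 - α) := by
      calc (‖A‖ + ‖B‖) ^ (1/α - 1) ≤ (2 * S ^ α) ^ (1/α - 1) :=
            Real.rpow_le_rpow (by positivity) hABnorm hβ0
      _ = 2 ^ (1/α - 1) * (S ^ α) ^ (1/α - 1) :=
            Real.mul_rpow (by norm_num) (Real.rpow_nonneg hS0 α)
      _ ≤ 2 * S ^ (1 - α) := by
          have e1 : (2:ℝ) ^ (1/α - 1) ≤ 2 := by
            calc (2:ℝ) ^ (1/α - 1) ≤ 2 ^ (1:ℝ) :=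
                  Real.rpow_le_rpow_of_exponent_le one_le_two (by linarith)
            _ = 2 := Real.rpow_one 2
          have e2 : (S ^ α) ^ (1/α - 1) = S ^ (1 - α) := by
            rw [← Real.rpow_mul hS0]
            congr 1
            field_simp
          rw [e2]
          exact mul_le_mul_of_nonneg_right e1 (Real.rpow_nonneg hS0 _)
    have hflat : ‖a - b‖ ≤ 4 * (S ^ (1 - α) * D) := by
      calc ‖a - b‖ ≤ 2 * (‖A‖ + ‖B‖) ^ (1/α - 1) * D := h
      _ ≤ 2 * (2 * S ^ (1 - α)) * D := by
          exact mul_le_mul_of_nonneg_right (by linarith) hD0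
      _ = 4 * (S ^ (1 - α) * D) := by ring
    have hne : (2*α - 1) + 1 ≠ 0 := by intro hc; nlinarith
    have hne2 : (2*α - 1) + (1 - α) ≠ 0 := by intro hc; nlinarith
    calc ‖a - b‖ ^ (2*α) = ‖a - b‖ ^ (2*α - 1) * ‖a - b‖ := by
          have e := Real.rpow_add' hab0 hne
          rw [Real.rpow_one] at e
          rw [← e]
          congr 1
          ring
    _ ≤ S ^ (2*α - 1) * (4 * (S ^ (1 - α) * D)) :=
        mul_le_mul (Real.rpow_le_rpow hab0 habS (by linarith)) hflat hab0
          (Real.rpow_nonneg hS0 _)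
    _ = 4 * ((S ^ (2*α - 1) * S ^ (1 - α)) * D) := by ring
    _ = 4 * (S ^ α * D) := by
        rw [← Real.rpow_add' hS0 hne2]
        congr 3
        ring
    _ ≤ (3 ^ α + 4) * (S ^ α * D) := by
        nlinarith [mul_nonneg (Real.rpow_nonneg hS0 α) hD0]

end Aux

/-- There is a constant `c > 0` depending only on `q > 0` such that for all `n, N ≥ 1`,
measurable `Ω ⊆ ℝ^n`, and `w₁, w₂ ∈ L^{q+1}(Ω, ℝ^N)`:
`∫_Ω |w₁ − w₂|^{q+1} ≤ c·(∫_Ω (|w₁| + |w₂|)^{q+1})^{1/2}·(∫_Ω |w₁^{⟨(q+1)/2⟩} − w₂^{⟨(q+1)/2⟩}|²)^{1/2}`,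
with both integrals on the right-hand side finite. -/
theorem stmt19 (q : ℝ) (hq : 0 < q) :
    ∃ c : ℝ, 0 < c ∧ ∀ (n N : ℕ), 1 ≤ n → 1 ≤ N →
      ∀ (Ω : Set (EuclideanSpace ℝ (Fin n))), MeasurableSet Ω →
      ∀ w₁ w₂ : EuclideanSpace ℝ (Fin n) → EuclideanSpace ℝ (Fin N),
        MemLp w₁ (ENNReal.ofReal (q + 1)) (volume.restrict Ω) →
        MemLp w₂ (ENNReal.ofReal (q + 1)) (volume.restrict Ω) →
        IntegrableOn (fun x => (‖w₁ x‖ + ‖w₂ x‖) ^ (q + 1)) Ω ∧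
        IntegrableOn (fun x => ‖vpow ((q + 1) / 2) (w₁ x) - vpow ((q + 1) / 2) (w₂ x)‖ ^ (2:ℕ)) Ω ∧
        ∫ x in Ω, ‖w₁ x - w₂ x‖ ^ (q + 1) ≤
          c * (∫ x in Ω, (‖w₁ x‖ + ‖w₂ x‖) ^ (q + 1)) ^ ((1:ℝ) / 2) *
            (∫ x in Ω, ‖vpow ((q + 1) / 2) (w₁ x) - vpow ((q + 1) / 2) (w₂ x)‖ ^ (2:ℕ)) ^ ((1:ℝ) / 2) := by
  have hα : (1:ℝ)/2 < (q+1)/2 := by linarith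
  have hα0 : (0:ℝ) < (q+1)/2 := by linarith
  have hq1 : (0:ℝ) < q + 1 := by linarith
  set α : ℝ := (q+1)/2 with hαdef
  refine ⟨3 ^ α + 4, by positivity, ?_⟩
  intro n N hn hN Ω hΩ w₁ w₂ hw₁ hw₂
  set μ := volume.restrict Ω with hμ
  have hp0 : (ENNReal.ofReal (q+1)) ≠ 0 := by
    simp only [ne_eq, ENNReal.ofReal_eq_zero, not_le]; linarith
  have hptop : (ENNReal.ofReal (q+1)) ≠ ⊤ := ENNReal.ofReal_ne_top
  have hpt : (ENNReal.ofReal (q+1)).toReal = q + 1 := ENNReal.toReal_ofReal hq1.le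
  -- first integrability
  have hsum : MemLp (fun x => ‖w₁ x‖ + ‖w₂ x‖) (ENNReal.ofReal (q+1)) μ :=
    hw₁.norm.add hw₂.norm
  have h1 : Integrable (fun x => (‖w₁ x‖ + ‖w₂ x‖) ^ (q+1)) μ := by
    have h := hsum.integrable_norm_rpow hp0 hptop
    rw [hpt] at h
    refine h.congr (Filter.Eventually.of_forall fun x => ?_)
    show ‖‖w₁ x‖ + ‖w₂ x‖‖ ^ (q+1) = (‖w₁ x‖ + ‖w₂ x‖) ^ (q+1)
    rw [Real.norm_of_nonneg (by positivity)]
  -- membership of vpow compositions in L²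
  have hmem : ∀ w : EuclideanSpace ℝ (Fin n) → EuclideanSpace ℝ (Fin N),
      MemLp w (ENNReal.ofReal (q+1)) μ → MemLp (fun x => vpow α (w x)) 2 μ := by
    intro w hw
    have hmeas : AEStronglyMeasurable (fun x => vpow α (w x)) μ := by
      have hm : AEMeasurable (fun x => ‖w x‖ ^ (α - 1)) μ :=
        (hw.aestronglyMeasurable.norm.aemeasurable).pow aemeasurable_const
      exact hm.aestronglyMeasurable.smul hw.aestronglyMeasurable
    rw [memLp_two_iff_integrable_sq_norm hmeas]
    have hint := hw.integrable_norm_rpow hp0 hptop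
    rw [hpt] at hint
    refine hint.congr (Filter.Eventually.of_forall fun x => ?_)
    show ‖w x‖ ^ (q+1) = ‖vpow α (w x)‖ ^ (2:ℕ)
    rw [norm_vpow hα0, ← Real.rpow_natCast (‖w x‖ ^ α) 2,
      ← Real.rpow_mul (norm_nonneg _)]
    congr 1
    push_cast
    rw [hαdef]; ring
  have hV : MemLp (fun x => vpow α (w₁ x) - vpow α (w₂ x)) 2 μ :=
    (hmem w₁ hw₁).sub (hmem w₂ hw₂)
  have h2 : Integrable (fun x => ‖vpow α (w₁ x) - vpow α (w₂ x)‖ ^ (2:ℕ)) μ :=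
    (memLp_two_iff_integrable_sq_norm hV.aestronglyMeasurable).mp hV
  refine ⟨h1, h2, ?_⟩
  -- F and G
  set F : EuclideanSpace ℝ (Fin n) → ℝ := fun x => (‖w₁ x‖ + ‖w₂ x‖) ^ α with hF
  set G : EuclideanSpace ℝ (Fin n) → ℝ :=
    fun x => ‖vpow α (w₁ x) - vpow α (w₂ x)‖ with hG
  have hFmeas : AEStronglyMeasurable F μ :=
    ((hsum.aestronglyMeasurable.aemeasurable).pow aemeasurable_const).aestronglyMeasurable
  have hF2 : MemLp F 2 μ := by
    rw [memLp_two_iff_integrable_sq hFmeas]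
    refine h1.congr (Filter.Eventually.of_forall fun x => ?_)
    simp only [hF]
    rw [pow_two, ← Real.rpow_add' (by positivity) (by rw [hαdef]; intro hc; nlinarith)]
    congr 1
    rw [hαdef]; ring
  have hG2 : MemLp G 2 μ := hV.norm
  have two_eq : (ENNReal.ofReal (2:ℝ)) = 2 := by norm_num
  have hpq : Real.HolderConjugate 2 2 := Real.HolderConjugate.two_two
  have hFnn : 0 ≤ᵐ[μ] F := Filter.Eventually.of_forall fun x => by
    simp only [hF]; positivity
  have hGnn : 0 ≤ᵐ[μ] G := Filter.Eventually.of_forall fun x => norm_nonneg _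
  have hF2' : MemLp F (ENNReal.ofReal (2:ℝ)) μ := by rw [two_eq]; exact hF2
  have hG2' : MemLp G (ENNReal.ofReal (2:ℝ)) μ := by rw [two_eq]; exact hG2
  have CS := integral_mul_le_Lp_mul_Lq_of_nonneg hpq hFnn hGnn hF2' hG2'
  -- integrability of F * G
  have hFG : Integrable (fun x => F x * G x) μ := by
    have hsm := MemLp.smul (r := 1) (φ := F) (f := G) hG2 hF2
      (hpqr := ⟨by simp [ENNReal.inv_two_add_inv_two]⟩)
    refine (memLp_one_iff_integrable.mp hsm).congr
      (Filter.Eventually.of_forall fun x => ?_)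
    simp [smul_eq_mul]
  -- pointwise bound
  have hptwise : ∀ x, ‖w₁ x - w₂ x‖ ^ (q+1) ≤ (3 ^ α + 4) * (F x * G x) := by
    intro x
    have h := keyineq hα (w₁ x) (w₂ x)
    rw [show 2*α = q+1 by rw [hαdef]; ring] at h
    simpa only [hF, hG] using h
  calc ∫ x, ‖w₁ x - w₂ x‖ ^ (q+1) ∂μ
      ≤ ∫ x, (3 ^ α + 4) * (F x * G x) ∂μ :=
        integral_mono_of_nonneg (Filter.Eventually.of_forall fun x => by positivity)
          (hFG.const_mul _) (Filter.Eventually.of_forall hptwise)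
  _ = (3 ^ α + 4) * ∫ x, F x * G x ∂μ := integral_const_mul _ _
  _ ≤ (3 ^ α + 4) * ((∫ x, F x ^ (2:ℝ) ∂μ) ^ ((1:ℝ)/2) * (∫ x, G x ^ (2:ℝ) ∂μ) ^ ((1:ℝ)/2)) := by
      refine mul_le_mul_of_nonneg_left ?_ (by positivity)
      simpa using CS
  _ = (3 ^ α + 4) * (∫ x, (‖w₁ x‖ + ‖w₂ x‖) ^ (q+1) ∂μ) ^ ((1:ℝ)/2) *
        (∫ x, ‖vpow α (w₁ x) - vpow α (w₂ x)‖ ^ (2:ℕ) ∂μ) ^ ((1:ℝ)/2) := by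
      have e1 : ∫ x, F x ^ (2:ℝ) ∂μ = ∫ x, (‖w₁ x‖ + ‖w₂ x‖) ^ (q+1) ∂μ := by
        refine integral_congr_ae (Filter.Eventually.of_forall fun x => ?_)
        simp only [hF]
        rw [← Real.rpow_mul (by positivity)]
        congr 1
        rw [hαdef]; ring
      have e2 : ∫ x, G x ^ (2:ℝ) ∂μ = ∫ x, ‖vpow α (w₁ x) - vpow α (w₂ x)‖ ^ (2:ℕ) ∂μ := by
        refine integral_congr_ae (Filter.Eventually.of_forall fun x => ?_)
        simp only [hG]
        rw [← Real.rpow_natCast (‖vpow α (w₁ x) - vpow α (w₂ x)‖) 2]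
        norm_num
      rw [e1, e2]
      ring
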